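/- Let 𝔾 be a compact quantum group acting on a C*-algebra A, and let π be an irreducible finite dimensional unitary representation of 𝔾, with n = dim H_π. Then the map φ_π : (A □ H_π) ⊗ H_π* → A_π defined by z ⊗ ω ↦ √n · (ι ⊗ ωQ_π^{-1})z is an isomorphism of B-bimodules which is compatible with the B-valued inner products, where H_π* carries the modified inner product ⟪e_i*, e_j*⟫ = ∑_k φ(u_ik u_jk*). -/
import Mathlib


/- ## Preamble: an axiomatized framework for compact quantum groups acting on C*-algebras.

Since Mathlib does not contain minimal tensor products of C*-algebras, compact quantum
groups, Hilbert C*-modules etc., we axiomatize these notions as structures whose fields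
record precisely the defining properties used in the paper
"A construction of finite index C*-algebra inclusions from free actions of compact
quantum groups" by K. De Commer and M. Yamashita. -/

noncomputable section

open scoped ComplexOrder

/-- The closed linear span `[S]` of a subset of a topological `ℂ`-module. -/
def cspan {T : Type*} [AddCommGroup T] [Module ℂ T] [TopologicalSpace T] (S : Set T) : Set T :=
  closure (Submodule.span ℂ S : Set T)

/-- Positivity in a C*-algebra: `x ≥ 0` iff `x = w* w` for some `w`. -/
def IsPos {A : Type*} [NonUnitalNonAssocSemiring A] [StarRing A] (x : A) : Prop :=
  ∃ w, x = star w * w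

/-- Axiomatization of a C*-algebraic tensor product (such as the minimal/spatial one) of
two C*-algebras `A` and `B`: a C*-algebra `T` receiving a bilinear map with the canonical
algebraic properties, the cross-norm property, and densely spanning range. -/
structure CStarTP (A B T : Type*) [NonUnitalCStarAlgebra A] [NonUnitalCStarAlgebra B]
    [NonUnitalCStarAlgebra T] where
  tmul : A →ₗ[ℂ] B →ₗ[ℂ] T
  tmul_mul : ∀ a a' b b', tmul a b * tmul a' b' = tmul (a * a') (b * b')
  tmul_star : ∀ a b, star (tmul a b) = tmul (star a) (star b)
  tmul_norm : ∀ a b, ‖tmul a b‖ = ‖a‖ * ‖b‖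
  dense : cspan {t | ∃ a b, t = tmul a b} = Set.univ

/-- A compact quantum group `𝔾`: a unital C*-algebra `C = C(𝔾)` together with a unital
coassociative comultiplication `Δ : C → C ⊗min C` satisfying the cancellation properties.
The tensor products `CC = C ⊗min C` and `CCC = C ⊗min C ⊗min C` are part of the data,
as are the amplified maps `Δ ⊗ ι` and `ι ⊗ Δ` (extending the algebraic ones). -/
structure CQG where
  C : Type*
  [instC : CStarAlgebra C]
  CC : Type*
  [instCC : CStarAlgebra CC]
  CCC : Type*
  [instCCC : CStarAlgebra CCC]
  τ : CStarTP C C CC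
  τ12 : CStarTP CC C CCC
  τ23 : CStarTP C CC CCC
  τassoc : ∀ a b c, τ12.tmul (τ.tmul a b) c = τ23.tmul a (τ.tmul b c)
  comul : C →⋆ₐ[ℂ] CC
  comulL : CC →⋆ₐ[ℂ] CCC
  comulL_spec : ∀ a b, comulL (τ.tmul a b) = τ12.tmul (comul a) b
  comulR : CC →⋆ₐ[ℂ] CCC
  comulR_spec : ∀ a b, comulR (τ.tmul a b) = τ23.tmul a (comul b)
  coassoc : ∀ x, comulL (comul x) = comulR (comul x)
  cancel_left : cspan {t : CC | ∃ x y, t = comul x * τ.tmul 1 y} = Set.univ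
  cancel_right : cspan {t : CC | ∃ x y, t = comul x * τ.tmul y 1} = Set.univ

attribute [instance] CQG.instC CQG.instCC CQG.instCCC

/-- The Haar state of a compact quantum group: a state `φ` which is left and right
invariant.  The slice maps `φ ⊗ ι` and `ι ⊗ φ` are part of the data. -/
structure Haar (G : CQG) where
  φ : G.C →ₗ[ℂ] ℂ
  unital : φ 1 = 1
  pos : ∀ x, 0 ≤ φ (star x * x)
  sliceL : G.CC →ₗ[ℂ] G.C
  sliceL_spec : ∀ a b, sliceL (G.τ.tmul a b) = φ a • b
  sliceL_cont : Continuous sliceL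
  sliceR : G.CC →ₗ[ℂ] G.C
  sliceR_spec : ∀ a b, sliceR (G.τ.tmul a b) = φ b • a
  sliceR_cont : Continuous sliceR
  inv_left : ∀ x, sliceL (G.comul x) = φ x • 1
  inv_right : ∀ x, sliceR (G.comul x) = φ x • 1

/-- A finite dimensional unitary representation of `G` on the Hilbert space `ℂⁿ`
(with orthonormal basis `(e_i)`), described by its matrix of coefficients
`u = (u_ij)`, where `δ_π(e_i) = ∑_j u_ij ⊗ e_j`.  Unitarity of `u` corresponds to
`δ_π(v)* δ_π(w) = 1 ⊗ ⟨v,w⟩`. -/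
structure QRep (G : CQG) (n : ℕ) where
  u : Matrix (Fin n) (Fin n) G.C
  comul_u : ∀ i j, G.comul (u i j) = ∑ k, G.τ.tmul (u i k) (u k j)
  unitary : ∀ i j, (∑ k, star (u i k) * u j k) = if i = j then (1 : G.C) else 0
  unitary' : ∀ i j, (∑ k, u k i * star (u k j)) = if i = j then (1 : G.C) else 0

/-- `T` intertwines the representations `ρ` and `σ` (as a map `H_ρ → H_σ`,
`T e_i = ∑_j T_{ji} e_j`). -/
def Intertwines {G : CQG} {n m : ℕ} (ρ : QRep G n) (σ : QRep G m)
    (T : Matrix (Fin m) (Fin n) ℂ) : Prop :=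
  ∀ (i : Fin n) (k : Fin m), (∑ j, T j i • σ.u j k) = ∑ j, T k j • ρ.u i j

/-- Irreducibility: every self-intertwiner is scalar. -/
def QRep.IsIrreducible {G : CQG} {n : ℕ} (ρ : QRep G n) : Prop :=
  ∀ T : Matrix (Fin n) (Fin n) ℂ, Intertwines ρ ρ T → ∃ c : ℂ, T = c • (1 : Matrix (Fin n) (Fin n) ℂ)

/-- `ρ` occurs in `π` with nonzero multiplicity. -/
def QRep.OccursIn {G : CQG} {n m : ℕ} (ρ : QRep G n) (π : QRep G m) : Prop :=
  ∃ T : Matrix (Fin m) (Fin n) ℂ, T ≠ 0 ∧ Intertwines ρ π T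

/-- The linear span `P(𝔾)` of all matrix coefficients of finite dimensional unitary
representations of `G`. -/
def coeffSpan (G : CQG) : Submodule ℂ G.C :=
  Submodule.span ℂ {x : G.C | ∃ (n : ℕ) (ρ : QRep G n) (i j : Fin n), x = ρ.u i j}

/-- `χ` is the quantum character `χ_π` of the representation `π`: the element of `P(𝔾)`
such that `(φ(χ ·) ⊗ ι)δ_ρ` is `0` for irreducible `ρ` not occurring in `π` and the
identity for irreducible `ρ` occurring in `π`. -/
def IsQuantumCharacter {G : CQG} (H : Haar G) {m : ℕ} (π : QRep G m) (χ : G.C) : Prop :=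
  χ ∈ coeffSpan G ∧
    ∀ (n : ℕ) (ρ : QRep G n), ρ.IsIrreducible → ∀ i j,
      (ρ.OccursIn π → H.φ (χ * ρ.u i j) = if i = j then 1 else 0) ∧
      (¬ ρ.OccursIn π → H.φ (χ * ρ.u i j) = 0)

/-- Antipode data for `G`: a linear map acting as the antipode on the matrix
coefficients (where it is densely defined), together with its inverse behaviour. -/
structure Antipode (G : CQG) where
  S : G.C →ₗ[ℂ] G.C
  spec : ∀ (n : ℕ) (ρ : QRep G n) (i j : Fin n), S (ρ.u i j) = star (ρ.u j i)
  Sinv : G.C →ₗ[ℂ] G.C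
  sinv_spec : ∀ (n : ℕ) (ρ : QRep G n) (i j : Fin n), Sinv (star (ρ.u j i)) = ρ.u i j

/-- An action (continuous coaction) `α : A → A ⊗min C(𝔾)` of the compact quantum group
`G` on a (possibly non-unital) C*-algebra `A`: an injective nondegenerate
*-homomorphism satisfying the coaction identity `(α ⊗ ι)α = (ι ⊗ Δ)α` and the Podleś
density condition `[α(A)(1 ⊗ C(𝔾))] = A ⊗min C(𝔾)`.  The tensor products
`AC = A ⊗min C(𝔾)`, `ACC = A ⊗min C(𝔾) ⊗min C(𝔾)`, the amplified maps `α ⊗ ι`,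
`ι ⊗ Δ`, multiplication by `1 ⊗ c`, and the slice maps `ι ⊗ φ(h ·)` are part of
the data. -/
structure CQGAction (G : CQG) (H : Haar G) (A : Type*) [NonUnitalCStarAlgebra A] where
  AC : Type*
  [instAC : NonUnitalCStarAlgebra AC]
  ACC : Type*
  [instACC : NonUnitalCStarAlgebra ACC]
  τA : CStarTP A G.C AC
  τ1 : CStarTP AC G.C ACC
  τ2 : CStarTP A G.CC ACC
  τAassoc : ∀ a b c, τ1.tmul (τA.tmul a b) c = τ2.tmul a (G.τ.tmul b c)
  α : A →⋆ₙₐ[ℂ] AC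
  inj : Function.Injective α
  αt : AC →⋆ₙₐ[ℂ] ACC
  αt_spec : ∀ a c, αt (τA.tmul a c) = τ1.tmul (α a) c
  Δt : AC →⋆ₙₐ[ℂ] ACC
  Δt_spec : ∀ a c, Δt (τA.tmul a c) = τ2.tmul a (G.comul c)
  coaction : ∀ a, αt (α a) = Δt (α a)
  nondeg : cspan {t : AC | ∃ a x, t = α a * x} = Set.univ
  /-- right multiplication `x ↦ x · (1 ⊗ c)` by the multiplier `1 ⊗ c` -/
  rmulC : AC →ₗ[ℂ] G.C →ₗ[ℂ] AC
  rmulC_spec : ∀ a c' c, rmulC (τA.tmul a c') c = τA.tmul a (c' * c)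
  rmulC_mul : ∀ x y c, rmulC (x * y) c = x * rmulC y c
  /-- left multiplication `x ↦ (1 ⊗ c) · x` by the multiplier `1 ⊗ c` -/
  lmulC : G.C →ₗ[ℂ] AC →ₗ[ℂ] AC
  lmulC_spec : ∀ c a c', lmulC c (τA.tmul a c') = τA.tmul a (c * c')
  lmulC_mul : ∀ c x y, lmulC c (x * y) = lmulC c x * y
  /-- the Podleś density condition `[α(A)(1 ⊗ C(𝔾))] = A ⊗min C(𝔾)` -/
  podles : cspan {t : AC | ∃ a c, t = rmulC (α a) c} = Set.univ
  /-- slice maps `ι ⊗ φ(h ·) : A ⊗min C(𝔾) → A` -/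
  sliceh : G.C → AC →ₗ[ℂ] A
  sliceh_spec : ∀ h a c, sliceh h (τA.tmul a c) = H.φ (h * c) • a
  sliceh_cont : ∀ h, Continuous (sliceh h)

attribute [instance] CQGAction.instAC CQGAction.instACC

namespace CQGAction

variable {G : CQG} {H : Haar G} {A : Type*} [NonUnitalCStarAlgebra A]

/-- The fixed point algebra `B = A^𝔾 = {x | α(x) = x ⊗ 1}`. -/
def fixed (act : CQGAction G H A) : Set A := {x | act.α x = act.τA.tmul x 1}

/-- The conditional expectation `E_B = (ι ⊗ φ) ∘ α : A → B`. -/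
def EB (act : CQGAction G H A) (x : A) : A := act.sliceh 1 (act.α x)

/-- `E_π`-type maps: `a ↦ (ι ⊗ φ(h ·))(α(a))`; for `h = χ_π` this is the projection
onto the isotypical component `A_π`. -/
def Eslice (act : CQGAction G H A) (h : G.C) (x : A) : A := act.sliceh h (act.α x)

/-- The space `A □ H_π` of equivariant vectors: in coordinates,
`z = ∑_i z_i ⊗ e_i` with `(α ⊗ ι)z = (ι ⊗ δ_π)z`, i.e. `α(z_j) = ∑_i z_i ⊗ u_ij`. -/
def box (act : CQGAction G H A) {n : ℕ} (π : QRep G n) : Set (Fin n → A) :=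
  {v | ∀ j, act.α (v j) = ∑ i, act.τA.tmul (v i) (π.u i j)}

/-- The isotypical component `A_π ⊆ A`: the span of the coordinates `(ι ⊗ ω)z` of
elements `z ∈ A □ H_π`, `ω ∈ H_π*`. -/
def isotyp (act : CQGAction G H A) {n : ℕ} (π : QRep G n) : Submodule ℂ A :=
  Submodule.span ℂ {x | ∃ v ∈ act.box π, ∃ j, x = v j}

/-- The Ellwood (freeness) condition : `[α(A)(A ⊗ 1)] = A ⊗min C(𝔾)`. -/
def IsFree (act : CQGAction G H A) : Prop :=
  cspan {t : act.AC | ∃ a a', t = act.α a * act.τA.tmul a' 1} = Set.univ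

end CQGAction

/-- The `π`-th spectral subspace `C(𝔾)_π` of `C(𝔾)` for the regular coaction `Δ`:
coordinates of elements of `C(𝔾) □ H_π`. -/
def regBox (G : CQG) {n : ℕ} (π : QRep G n) : Set (Fin n → G.C) :=
  {v | ∀ j, G.comul (v j) = ∑ i, G.τ.tmul (v i) (π.u i j)}

/-- The isotypical component `C(𝔾)_π` of `C(𝔾)` (the span of matrix coefficients
of `π`). -/
def regIsotyp (G : CQG) {n : ℕ} (π : QRep G n) : Submodule ℂ G.C :=
  Submodule.span ℂ {x | ∃ v ∈ regBox G π, ∃ j, x = v j}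
open scoped TensorProduct

/-- `A □ H_π` as a `ℂ`-submodule of `A^n`. -/
def boxSub {G : CQG} {H : Haar G} {A : Type*} [NonUnitalCStarAlgebra A]
    (act : CQGAction G H A) {n : ℕ} (π : QRep G n) : Submodule ℂ (Fin n → A) where
  carrier := act.box π
  zero_mem' := by
    intro j
    show act.α ((0 : Fin n → A) j) = _
    rw [Pi.zero_apply, map_zero act.α]
    simp
  add_mem' := by
    intro v w hv hw j
    simp only [Pi.add_apply, map_add, hv j, hw j, ← Finset.sum_add_distrib,
      LinearMap.add_apply]
  smul_mem' := by
    intro c v hv j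
    show act.α ((c • v) j) = _
    rw [Pi.smul_apply, map_smul act.α, hv j, Finset.smul_sum]
    refine Finset.sum_congr rfl fun i _ => ?_
    rw [Pi.smul_apply, map_smul, LinearMap.smul_apply]


section Aux

variable {G : CQG} {H : Haar G} {A : Type*} [NonUnitalCStarAlgebra A]

/-- `α` as a `ℂ`-linear map. -/
private def alin (act : CQGAction G H A) : A →ₗ[ℂ] act.AC where
  toFun := act.α
  map_add' := map_add _
  map_smul' := map_smul _

private lemma alin_apply (act : CQGAction G H A) (x : A) : alin act x = act.α x := rfl

private lemma aux_slice (act : CQGAction G H A) {n : ℕ} (π : QRep G n)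
    (Q : Matrix (Fin n) (Fin n) ℂ)
    (hQ1 : ∀ i j k l, H.φ (star (π.u i j) * π.u k l) =
      (if i = k then (1:ℂ) else 0) * Q l j / Q.trace)
    {v : Fin n → A} (hv : v ∈ act.box π) (i₀ k₀ k : Fin n) :
    act.sliceh (star (π.u i₀ k₀)) (act.α (v k)) = (Q k k₀ / Q.trace) • v i₀ := by
  rw [hv k, map_sum]
  rw [Finset.sum_congr rfl fun i _ => act.sliceh_spec _ _ _]
  rw [Finset.sum_congr rfl fun i _ => by rw [hQ1 i₀ k₀ i k]]
  have h : ∀ i : Fin n, ((if i₀ = i then (1:ℂ) else 0) * Q k k₀ / Q.trace) • v i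
      = if i₀ = i then (Q k k₀ / Q.trace) • v i else 0 := by
    intro i; by_cases h : i₀ = i <;> simp [h]
  rw [Finset.sum_congr rfl fun i _ => h i, Finset.sum_ite_eq]
  simp

private lemma aux_EB (act : CQGAction G H A) {n : ℕ} (π : QRep G n)
    (Q : Matrix (Fin n) (Fin n) ℂ)
    (hQ1 : ∀ i j k l, H.φ (star (π.u i j) * π.u k l) =
      (if i = k then (1:ℂ) else 0) * Q l j / Q.trace)
    {v v' : Fin n → A} (hv : v ∈ act.box π) (hv' : v' ∈ act.box π) (b d : Fin n) :
    act.EB (star (v b) * v' d) = (Q d b / Q.trace) • ∑ i, star (v i) * v' i := by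
  show act.sliceh 1 (act.α (star (v b) * v' d)) = _
  rw [map_mul, map_star, hv b, hv' d, star_sum]
  calc act.sliceh 1 ((∑ i, star (act.τA.tmul (v i) (π.u i b))) *
          ∑ i', act.τA.tmul (v' i') (π.u i' d))
      = ∑ i, ∑ i', ((if i = i' then (1:ℂ) else 0) * Q d b / Q.trace) •
          (star (v i) * v' i') := by
        rw [Finset.sum_mul_sum, map_sum]
        refine Finset.sum_congr rfl fun i _ => ?_
        rw [map_sum]
        refine Finset.sum_congr rfl fun i' _ => ?_
        rw [act.τA.tmul_star, act.τA.tmul_mul, act.sliceh_spec, one_mul, hQ1]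
    _ = ∑ i, (Q d b / Q.trace) • (star (v i) * v' i) := by
        refine Finset.sum_congr rfl fun i _ => ?_
        have h : ∀ i' : Fin n, ((if i = i' then (1:ℂ) else 0) * Q d b / Q.trace) •
            (star (v i) * v' i')
            = if i = i' then (Q d b / Q.trace) • (star (v i) * v' i') else 0 := by
          intro i'; by_cases h : i = i' <;> simp [h]
        rw [Finset.sum_congr rfl fun i' _ => h i', Finset.sum_ite_eq]
        simp
    _ = (Q d b / Q.trace) • ∑ i, star (v i) * v' i := by rw [Finset.smul_sum]

end Aux

/-- Lemma 2.2: for an action of `𝔾` on `A` and an irreducible `π` with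
`n = dim H_π` and Woronowicz matrix `Q = Q_π`, the map
`φ_π : (A □ H_π) ⊗ H_π* → A_π`, `z ⊗ ω ↦ √n (ι ⊗ ω Q_π^{-1}) z`, is an isomorphism
of `B`-bimodules compatible with the `B`-valued inner products, where `H_π*` carries
the modified inner product `⟪e_i*, e_j*⟫ = ∑_k φ(u_ik u_jk*)`.
Here `H_π* ≅ ℂⁿ` via the dual basis `(e_i*)`. -/
theorem box_tensor_dual_iso_isotyp
    (G : CQG) (H : Haar G) {A : Type*} [NonUnitalCStarAlgebra A]
    (act : CQGAction G H A) {n : ℕ} (π : QRep G n) (hirr : π.IsIrreducible)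
    (Q : Matrix (Fin n) (Fin n) ℂ) (hQpos : Q.PosDef) (hQinv : IsUnit Q)
    (hQtr : Q.trace = Q⁻¹.trace)
    (hQ1 : ∀ i j k l, H.φ (star (π.u i j) * π.u k l) =
      (if i = k then (1:ℂ) else 0) * Q l j / Q.trace)
    (hQ2 : ∀ i j k l, H.φ (π.u i j * star (π.u k l)) =
      (if j = l then (1:ℂ) else 0) * Q⁻¹ k i / Q⁻¹.trace) :
    ∃ Φ : (boxSub act π ⊗[ℂ] (Fin n → ℂ)) →ₗ[ℂ] A,
      -- `Φ` is the map `z ⊗ ω ↦ √n (ι ⊗ ω Q_π^{-1}) z`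
      (∀ (v : boxSub act π) (w : Fin n → ℂ),
        Φ (v ⊗ₜ w) = (Real.sqrt n : ℂ) • ∑ j, ∑ k, (w j * Q⁻¹ j k) • (v : Fin n → A) k) ∧
      -- it is a linear isomorphism onto `A_π`
      Function.Injective Φ ∧ LinearMap.range Φ = act.isotyp π ∧
      -- it is a `B`-bimodule map: `φ_π(b·(z ⊗ ω)) = b φ_π(z ⊗ ω)` and
      -- `φ_π((z ⊗ ω)·b) = φ_π(z ⊗ ω) b` for `b ∈ B`
      (∀ b ∈ act.fixed, ∀ (v v' : boxSub act π) (w : Fin n → ℂ),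
        (∀ i, (v' : Fin n → A) i = b * (v : Fin n → A) i) →
          Φ (v' ⊗ₜ w) = b * Φ (v ⊗ₜ w)) ∧
      (∀ b ∈ act.fixed, ∀ (v v' : boxSub act π) (w : Fin n → ℂ),
        (∀ i, (v' : Fin n → A) i = (v : Fin n → A) i * b) →
          Φ (v' ⊗ₜ w) = Φ (v ⊗ₜ w) * b) ∧
      -- it is compatible with the `B`-valued inner products:
      -- `⟨φ_π(z ⊗ ω), φ_π(z' ⊗ ω')⟩_B = ⟪ω, ω'⟫ ⟨z, z'⟩_B`
      (∀ (v v' : boxSub act π) (w w' : Fin n → ℂ),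
        act.EB (star (Φ (v ⊗ₜ w)) * Φ (v' ⊗ₜ w')) =
          (∑ i, ∑ j, (starRingEnd ℂ) (w i) * w' j *
              (∑ k, H.φ (π.u i k * star (π.u j k)))) •
            ∑ k, star ((v : Fin n → A) k) * (v' : Fin n → A) k) := by
  classical
  have hdet : IsUnit Q.det := (Matrix.isUnit_iff_isUnit_det Q).mp hQinv
  have hQQi : Q * Q⁻¹ = 1 := Matrix.mul_nonsing_inv Q hdet
  have hQiQ : Q⁻¹ * Q = 1 := Matrix.nonsing_inv_mul Q hdet
  have hherm : ∀ a c, (starRingEnd ℂ) (Q⁻¹ a c) = Q⁻¹ c a := fun a c =>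
    hQpos.isHermitian.inv.apply c a
  have htr : 0 < n → Q.trace ≠ 0 := by
    intro hn h0
    let k0 : Fin n := ⟨0, hn⟩
    have h1 : (∑ k, H.φ (star (π.u k0 k) * π.u k0 k)) = 1 := by
      rw [← map_sum, π.unitary k0 k0, if_pos rfl, H.unital]
    rw [Finset.sum_congr rfl (fun k _ => by rw [hQ1, h0, div_zero])] at h1
    simp at h1
  -- the bilinear map
  let F : (boxSub act π) →ₗ[ℂ] (Fin n → ℂ) →ₗ[ℂ] A := LinearMap.mk₂ ℂ
    (fun v w => (Real.sqrt n : ℂ) • ∑ j, ∑ k, (w j * Q⁻¹ j k) • (v : Fin n → A) k)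
    (fun v v' w => by
      simp only [Submodule.coe_add, Pi.add_apply, smul_add, Finset.sum_add_distrib])
    (fun c v w => by
      simp only [SetLike.val_smul, Pi.smul_apply, smul_comm c, Finset.smul_sum])
    (fun v w w' => by
      simp only [Pi.add_apply, add_mul, add_smul, Finset.sum_add_distrib, smul_add])
    (fun c v w => by
      simp only [Pi.smul_apply, smul_eq_mul, mul_assoc, mul_smul, Finset.smul_sum,
        smul_comm c])
  have hΦ : ∀ (v : boxSub act π) (w : Fin n → ℂ),
      TensorProduct.lift F (v ⊗ₜ[ℂ] w)
        = (Real.sqrt n : ℂ) • ∑ j, ∑ k, (w j * Q⁻¹ j k) • (v : Fin n → A) k :=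
    fun v w => rfl
  refine ⟨TensorProduct.lift F, hΦ, ?_, ?_, ?_, ?_, ?_⟩
  · -- injectivity
    have hker : ∀ t : (boxSub act π) ⊗[ℂ] (Fin n → ℂ),
        TensorProduct.lift F t = 0 → t = 0 := ?_
    · intro t t' htt
      exact sub_eq_zero.mp (hker (t - t') (by rw [map_sub, htt, sub_self]))
    intro t ht
    let ψ : Fin n → ((boxSub act π) ⊗[ℂ] (Fin n → ℂ)) →ₗ[ℂ] (boxSub act π) := fun j =>
      (TensorProduct.rid ℂ (boxSub act π)).toLinearMap ∘ₗ
        LinearMap.lTensor (boxSub act π) (LinearMap.proj j)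
    have hψ : ∀ (j : Fin n) (v : boxSub act π) (w : Fin n → ℂ),
        ψ j (v ⊗ₜ[ℂ] w) = w j • v := by
      intro j v w
      simp [ψ, TensorProduct.rid_tmul]
    have hL : (∑ j, ((TensorProduct.mk ℂ (boxSub act π) (Fin n → ℂ)).flip
          (Pi.single j 1)) ∘ₗ (ψ j)) = LinearMap.id := by
      apply TensorProduct.ext'
      intro v w
      simp only [LinearMap.sum_apply, LinearMap.coe_comp, Function.comp_apply, hψ,
        LinearMap.flip_apply, TensorProduct.mk_apply, LinearMap.id_apply]
      calc ∑ j, (w j • v) ⊗ₜ[ℂ] (Pi.single j 1 : Fin n → ℂ)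
          = ∑ j, v ⊗ₜ[ℂ] (Pi.single j (w j) : Fin n → ℂ) := by
            refine Finset.sum_congr rfl fun j _ => ?_
            rw [TensorProduct.smul_tmul]
            congr 1
            rw [← Pi.single_smul, smul_eq_mul, mul_one]
        _ = v ⊗ₜ[ℂ] w := by
            rw [← TensorProduct.tmul_sum]
            congr 1
            exact Finset.univ_sum_single w
    have hdecomp : t = ∑ j, (ψ j t) ⊗ₜ[ℂ] (Pi.single j 1 : Fin n → ℂ) := by
      conv_lhs => rw [← LinearMap.id_apply (R := ℂ) t, ← hL]
      rw [LinearMap.sum_apply]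
      exact Finset.sum_congr rfl fun j _ => rfl
    have hFj : ∀ (m : boxSub act π) (j : Fin n),
        TensorProduct.lift F (m ⊗ₜ[ℂ] (Pi.single j 1 : Fin n → ℂ))
          = (Real.sqrt n : ℂ) • ∑ k, Q⁻¹ j k • (m : Fin n → A) k := by
      intro m j
      rw [hΦ]
      congr 1
      have h : ∀ j' : Fin n, (∑ k, ((Pi.single j (1:ℂ) : Fin n → ℂ) j' * Q⁻¹ j' k) •
          (m : Fin n → A) k)
          = if j' = j then ∑ k, Q⁻¹ j k • (m : Fin n → A) k else 0 := by
        intro j'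
        by_cases h : j' = j <;> simp [Pi.single_apply, h]
      rw [Finset.sum_congr rfl fun j' _ => h j', Finset.sum_ite_eq',
        if_pos (Finset.mem_univ j)]
    have key : ∀ (k₀ i₀ : Fin n), ((ψ k₀ t : boxSub act π) : Fin n → A) i₀ = 0 := by
      intro k₀ i₀
      have htr' : Q.trace ≠ 0 := htr k₀.pos
      have hsn : ((Real.sqrt n : ℝ) : ℂ) ≠ 0 := by
        exact_mod_cast (Real.sqrt_pos.mpr (by exact_mod_cast k₀.pos)).ne'
      let R : A →ₗ[ℂ] A := (act.sliceh (star (π.u i₀ k₀))) ∘ₗ alin act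
      have hRx : ∀ (m : boxSub act π) (k : Fin n),
          R ((m : Fin n → A) k) = (Q k k₀ / Q.trace) • (m : Fin n → A) i₀ :=
        fun m k => aux_slice act π Q hQ1 m.2 i₀ k₀ k
      have hRj : ∀ j : Fin n, R (TensorProduct.lift F ((ψ j t) ⊗ₜ[ℂ]
            (Pi.single j 1 : Fin n → ℂ)))
          = if j = k₀ then ((Real.sqrt n : ℂ) / Q.trace) •
              ((ψ j t : boxSub act π) : Fin n → A) i₀ else 0 := by
        intro j
        rw [hFj, map_smul, map_sum]
        rw [Finset.sum_congr rfl fun k _ => by rw [map_smul, hRx (ψ j t) k, smul_smul]]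
        rw [← Finset.sum_smul]
        have hsum : ∑ k, Q⁻¹ j k * (Q k k₀ / Q.trace)
            = (if j = k₀ then (1:ℂ) else 0) / Q.trace := by
          rw [Finset.sum_congr rfl fun k _ => (mul_div_assoc _ _ _).symm,
            ← Finset.sum_div]
          congr 1
          have := congrFun (congrFun hQiQ j) k₀
          rwa [Matrix.mul_apply, Matrix.one_apply] at this
        rw [hsum]
        by_cases h : j = k₀
        · rw [if_pos h, if_pos h, smul_smul, one_div, div_eq_mul_inv]
        · rw [if_neg h, if_neg h, zero_div, zero_smul, smul_zero]
      have hR0 : R (TensorProduct.lift F t) = 0 := by rw [ht, map_zero]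
      rw [show TensorProduct.lift F t = ∑ j, TensorProduct.lift F ((ψ j t) ⊗ₜ[ℂ]
          (Pi.single j 1 : Fin n → ℂ)) by rw [← map_sum, ← hdecomp], map_sum,
        Finset.sum_congr rfl fun j _ => hRj j, Finset.sum_ite_eq',
        if_pos (Finset.mem_univ k₀)] at hR0
      have hc : ((Real.sqrt n : ℝ) : ℂ) / Q.trace ≠ 0 := div_ne_zero hsn htr'
      have h2 : (((Real.sqrt n : ℝ) : ℂ) / Q.trace)⁻¹ • ((((Real.sqrt n : ℝ) : ℂ) / Q.trace) •
          ((ψ k₀ t : boxSub act π) : Fin n → A) i₀) = 0 := by rw [hR0, smul_zero]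
      rwa [smul_smul, inv_mul_cancel₀ hc, one_smul] at h2
    have ht0 : ∀ j, ψ j t = 0 := fun j => Subtype.ext (funext fun i => key j i)
    rw [hdecomp, Finset.sum_congr rfl fun j _ => by
      rw [ht0 j, TensorProduct.zero_tmul], Finset.sum_const_zero]

  · -- range
    apply le_antisymm
    · rintro x ⟨t, rfl⟩
      induction t using TensorProduct.induction_on with
      | zero => rw [map_zero]; exact zero_mem _
      | tmul v w =>
        rw [hΦ]
        refine Submodule.smul_mem _ _ (Submodule.sum_mem _ fun j _ =>
          Submodule.sum_mem _ fun k _ => Submodule.smul_mem _ _ ?_)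
        exact Submodule.subset_span ⟨(v : Fin n → A), v.2, k, rfl⟩
      | add x y hx hy => rw [map_add]; exact add_mem hx hy
    · rw [CQGAction.isotyp, Submodule.span_le]
      rintro x ⟨v, hv, j, rfl⟩
      have hn : (0:ℝ) < Real.sqrt n := Real.sqrt_pos.mpr (by exact_mod_cast j.pos)
      have hsn : ((Real.sqrt n : ℝ) : ℂ) ≠ 0 := by exact_mod_cast hn.ne'
      refine ⟨(⟨v, hv⟩ : boxSub act π) ⊗ₜ[ℂ]
        (fun j' => ((Real.sqrt n : ℝ) : ℂ)⁻¹ * Q j j'), ?_⟩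
      rw [hΦ]
      have hcol : ∀ k : Fin n, ∑ j', ((((Real.sqrt n : ℝ) : ℂ)⁻¹ * Q j j') * Q⁻¹ j' k) • v k
          = ((((Real.sqrt n : ℝ) : ℂ))⁻¹ * (if j = k then 1 else 0)) • v k := by
        intro k
        rw [← Finset.sum_smul]
        congr 1
        rw [Finset.sum_congr rfl (fun j' _ => mul_assoc _ _ _), ← Finset.mul_sum]
        congr 1
        have := congrFun (congrFun hQQi j) k
        rwa [Matrix.mul_apply, Matrix.one_apply] at this
      rw [Finset.sum_comm, Finset.sum_congr rfl fun k _ => hcol k]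
      have h2 : ∀ k : Fin n, ((((Real.sqrt n : ℝ) : ℂ))⁻¹ * (if j = k then 1 else 0)) • v k
          = if j = k then (((Real.sqrt n : ℝ) : ℂ))⁻¹ • v k else 0 := by
        intro k; by_cases h : j = k <;> simp [h]
      rw [Finset.sum_congr rfl fun k _ => h2 k, Finset.sum_ite_eq, if_pos (Finset.mem_univ j),
        smul_smul, mul_inv_cancel₀ hsn, one_smul]

  · -- left module map
    intro b _ v v' w hv'
    rw [hΦ, hΦ]
    simp only [hv', Finset.mul_sum, mul_smul_comm]
  · -- right module map
    intro b _ v v' w hv'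
    rw [hΦ, hΦ]
    simp only [hv', Finset.sum_mul, smul_mul_assoc]
  · -- inner products
    intro v v' w w'
    have hEB : ∀ b d : Fin n, act.EB (star ((v : Fin n → A) b) * (v' : Fin n → A) d)
        = (Q d b / Q.trace) • ∑ i, star ((v : Fin n → A) i) * (v' : Fin n → A) i :=
      fun b d => aux_EB act π Q hQ1 v.2 v'.2 b d
    have hn2 : ((Real.sqrt n : ℝ) : ℂ) * ((Real.sqrt n : ℝ) : ℂ) = (n : ℂ) := by
      rw [← Complex.ofReal_mul, Real.mul_self_sqrt (Nat.cast_nonneg n)]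
      norm_num
    have hstar : star (TensorProduct.lift F (v ⊗ₜ[ℂ] w))
        = ((Real.sqrt n : ℝ) : ℂ) • ∑ a, ∑ b,
            (starRingEnd ℂ) (w a * Q⁻¹ a b) • star ((v : Fin n → A) b) := by
      rw [hΦ, star_smul, star_sum]
      congr 1
      · exact Complex.conj_ofReal _
      · refine Finset.sum_congr rfl fun a _ => ?_
        rw [star_sum]
        refine Finset.sum_congr rfl fun b _ => ?_
        rw [star_smul]
        rfl
    have hmulEq : star (TensorProduct.lift F (v ⊗ₜ[ℂ] w)) * TensorProduct.lift F (v' ⊗ₜ[ℂ] w')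
        = (n : ℂ) • ∑ a, ∑ c, ∑ b, ∑ d,
            ((starRingEnd ℂ) (w a * Q⁻¹ a b) * (w' c * Q⁻¹ c d)) •
              (star ((v : Fin n → A) b) * (v' : Fin n → A) d) := by
      rw [hstar, hΦ, smul_mul_smul_comm, hn2]
      congr 1
      rw [Finset.sum_mul_sum]
      refine Finset.sum_congr rfl fun a _ => Finset.sum_congr rfl fun c _ => ?_
      rw [Finset.sum_mul_sum]
      exact Finset.sum_congr rfl fun b _ => Finset.sum_congr rfl fun d _ =>
        smul_mul_smul_comm _ _ _ _
    -- the linear conditional expectation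
    have hEBlin : ∀ x : A, act.EB x = ((act.sliceh 1) ∘ₗ alin act) x := fun _ => rfl
    have hkey : ∀ a c : Fin n,
        ∑ b, ∑ d, (starRingEnd ℂ) (Q⁻¹ a b) * (Q⁻¹ c d * Q d b) = Q⁻¹ c a := by
      intro a c
      have h1 : ∀ b, ∑ d, Q⁻¹ c d * Q d b = if c = b then 1 else 0 := fun b => by
        have := congrFun (congrFun hQiQ c) b
        rwa [Matrix.mul_apply, Matrix.one_apply] at this
      calc ∑ b, ∑ d, (starRingEnd ℂ) (Q⁻¹ a b) * (Q⁻¹ c d * Q d b)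
          = ∑ b, (starRingEnd ℂ) (Q⁻¹ a b) * (if c = b then 1 else 0) := by
            refine Finset.sum_congr rfl fun b _ => ?_
            rw [← Finset.mul_sum, h1]
        _ = (starRingEnd ℂ) (Q⁻¹ a c) := by simp
        _ = Q⁻¹ c a := hherm a c
    have hinner : ∀ a c : Fin n,
        ∑ b, ∑ d, ((starRingEnd ℂ) (w a * Q⁻¹ a b) * (w' c * Q⁻¹ c d)) * (Q d b / Q.trace)
          = (starRingEnd ℂ) (w a) * w' c * (Q⁻¹ c a / Q.trace) := by
      intro a c
      have h2 : ∀ b d : Fin n,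
          ((starRingEnd ℂ) (w a * Q⁻¹ a b) * (w' c * Q⁻¹ c d)) * (Q d b / Q.trace)
          = ((starRingEnd ℂ) (w a) * w' c / Q.trace) *
              ((starRingEnd ℂ) (Q⁻¹ a b) * (Q⁻¹ c d * Q d b)) := by
        intro b d; rw [map_mul]; ring
      rw [Finset.sum_congr rfl fun b _ => Finset.sum_congr rfl fun d _ => h2 b d,
        Finset.sum_congr rfl fun b _ => (Finset.mul_sum _ _ _).symm, ← Finset.mul_sum,
        hkey a c]
      ring
    -- now compute
    rw [hmulEq, hEBlin, map_smul, map_sum]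
    rw [Finset.sum_congr rfl fun a _ => map_sum _ _ _,
      Finset.sum_congr rfl fun a _ => Finset.sum_congr rfl fun c _ => map_sum _ _ _,
      Finset.sum_congr rfl fun a _ => Finset.sum_congr rfl fun c _ =>
        Finset.sum_congr rfl fun b _ => map_sum _ _ _]
    have hterm : ∀ a c b d : Fin n,
        ((act.sliceh 1) ∘ₗ alin act) (((starRingEnd ℂ) (w a * Q⁻¹ a b) * (w' c * Q⁻¹ c d)) •
            (star ((v : Fin n → A) b) * (v' : Fin n → A) d))
        = (((starRingEnd ℂ) (w a * Q⁻¹ a b) * (w' c * Q⁻¹ c d)) * (Q d b / Q.trace)) •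
            ∑ i, star ((v : Fin n → A) i) * (v' : Fin n → A) i := by
      intro a c b d
      rw [map_smul, ← hEBlin, hEB b d, smul_smul]
    rw [Finset.sum_congr rfl fun a _ => Finset.sum_congr rfl fun c _ =>
      Finset.sum_congr rfl fun b _ => Finset.sum_congr rfl fun d _ => hterm a c b d]
    have hφsum : ∀ i j : Fin n, (∑ k, H.φ (π.u i k * star (π.u j k)))
        = (n : ℂ) * (Q⁻¹ j i / Q.trace) := by
      intro i j
      rw [Finset.sum_congr rfl fun k _ => hQ2 i k j k]
      simp [← hQtr, Finset.sum_div, mul_div_assoc, mul_comm]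
    have hpull : ∀ f : Fin n → Fin n → Fin n → Fin n → ℂ,
        (∑ a, ∑ c, ∑ b, ∑ d, f a c b d •
            (∑ i, star ((v : Fin n → A) i) * (v' : Fin n → A) i))
        = (∑ a, ∑ c, ∑ b, ∑ d, f a c b d) •
            ∑ i, star ((v : Fin n → A) i) * (v' : Fin n → A) i := by
      intro f; simp only [Finset.sum_smul]
    rw [hpull, smul_smul]
    have hrhs : (∑ i, ∑ j, (starRingEnd ℂ) (w i) * w' j *
          (∑ k, H.φ (π.u i k * star (π.u j k))))
        = ∑ i, ∑ j, (starRingEnd ℂ) (w i) * w' j * ((n:ℂ) * (Q⁻¹ j i / Q.trace)) :=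
      Finset.sum_congr rfl fun i _ => Finset.sum_congr rfl fun j _ => by rw [hφsum i j]
    rw [hrhs]
    congr 1
    rw [Finset.sum_congr rfl fun a _ => Finset.sum_congr rfl fun c _ => hinner a c]
    rw [Finset.mul_sum]
    refine Finset.sum_congr rfl fun a _ => ?_
    rw [Finset.mul_sum]
    refine Finset.sum_congr rfl fun c _ => ?_
    ring
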